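/- For non-negative operators ρ, σ on a finite-dimensional Hilbert space, the trace distance is bounded above via the fidelity: ‖ρ - σ‖ ≤ √((Tr ρ + Tr σ)² − 4 F(ρ,σ)²), where F(ρ,σ) = Tr√(√ρ σ √ρ). -/

import Mathlib

set_option linter.unusedSectionVars false
set_option maxHeartbeats 1000000
open Matrix


open scoped ComplexOrder

/-- The positive semidefinite square root of a positive semidefinite matrix
(removed from Mathlib; restored with its old definition). -/
noncomputable def Matrix.PosSemidef.sqrt {n : Type*} [Fintype n] [DecidableEq n]
    {A : Matrix n n ℂ} (hA : A.PosSemidef) : Matrix n n ℂ :=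
  hA.isHermitian.eigenvectorUnitary.1 * Matrix.diagonal ((↑) ∘ (√·) ∘ hA.isHermitian.eigenvalues) *
  (star hA.isHermitian.eigenvectorUnitary : Matrix n n ℂ)

theorem Matrix.PosSemidef.posSemidef_sqrt {n : Type*} [Fintype n] [DecidableEq n]
    {A : Matrix n n ℂ} (hA : A.PosSemidef) : hA.sqrt.PosSemidef := by
  unfold Matrix.PosSemidef.sqrt
  have := (Matrix.posSemidef_diagonal_iff (R := ℂ) (d := ((↑) ∘ (√·) ∘ hA.isHermitian.eigenvalues))).mpr
    (fun i => by simp)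
  exact this.mul_mul_conjTranspose_same (hA.isHermitian.eigenvectorUnitary : Matrix n n ℂ)

/-- Trace norm `‖A‖₁ = Tr √(Aᴴ A)` of a complex matrix. -/
noncomputable def traceNorm {n : Type*} [Fintype n] [DecidableEq n] (A : Matrix n n ℂ) : ℝ :=
  ((Matrix.posSemidef_conjTranspose_mul_self A).sqrt.trace).re

/-- Fidelity `F(ρ,σ) = Tr √(√ρ σ √ρ)` of two positive semidefinite matrices. -/
noncomputable def fid {n : Type*} [Fintype n] [DecidableEq n] {ρ σ : Matrix n n ℂ}
    (hρ : ρ.PosSemidef) (hσ : σ.PosSemidef) : ℝ := by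
  have h : (hρ.sqrt * σ * hρ.sqrt).PosSemidef := by
    have h2 := hσ.mul_mul_conjTranspose_same (B := hρ.sqrt)
    rwa [hρ.posSemidef_sqrt.isHermitian.eq] at h2
  exact h.sqrt.trace.re


namespace TNaux
variable {n : Type*} [Fintype n] [DecidableEq n]



/-- view a matrix as a Euclidean vector -/
def toE (X : Matrix n n ℂ) : EuclideanSpace ℂ (n × n) := WithLp.toLp 2 (fun p : n × n => X p.1 p.2)

lemma trace_eq_inner (X Y : Matrix n n ℂ) :
    (Xᴴ * Y).trace = inner (𝕜 := ℂ) (toE X) (toE Y) := by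
  rw [PiLp.inner_apply]
  simp only [RCLike.inner_apply, toE, PiLp.toLp_apply]
  rw [Matrix.trace, Fintype.sum_prod_type]
  simp only [Matrix.diag_apply, Matrix.mul_apply, Matrix.conjTranspose_apply]
  rw [Finset.sum_comm]
  exact Finset.sum_congr rfl (fun _ _ => Finset.sum_congr rfl (fun _ _ => mul_comm _ _))

lemma trace_self_re (X : Matrix n n ℂ) :
    ((Xᴴ * X).trace).re = ‖toE X‖ ^ 2 := by
  rw [trace_eq_inner, inner_self_eq_norm_sq_to_K]
  norm_cast

lemma trace_self_nonneg (X : Matrix n n ℂ) : 0 ≤ ((Xᴴ * X).trace).re := by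
  rw [trace_self_re]; positivity

lemma cs (X Y : Matrix n n ℂ) :
    ((Xᴴ * Y).trace).re ≤ Real.sqrt ((Xᴴ * X).trace).re * Real.sqrt ((Yᴴ * Y).trace).re := by
  rw [trace_self_re, trace_self_re, Real.sqrt_sq (norm_nonneg _), Real.sqrt_sq (norm_nonneg _),
    trace_eq_inner]
  calc (inner (𝕜 := ℂ) (toE X) (toE Y)).re ≤ ‖(inner (𝕜 := ℂ) (toE X) (toE Y))‖ :=
        Complex.re_le_norm _
    _ ≤ _ := norm_inner_le_norm _ _


lemma exists_polar (M : Matrix n n ℂ) :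
    ∃ W : Matrix n n ℂ, W ∈ Matrix.unitaryGroup n ℂ ∧
      W * (Matrix.posSemidef_conjTranspose_mul_self M).sqrt = M := by
  classical
  set h := Matrix.posSemidef_conjTranspose_mul_self M with hh
  set hH := h.1 with hhH
  set lam := hH.eigenvalues with hlam
  have hlam0 : ∀ j, 0 ≤ lam j := h.eigenvalues_nonneg
  set U : Matrix n n ℂ := hH.eigenvectorUnitary.1 with hU
  have hUu : U ∈ Matrix.unitaryGroup n ℂ := hH.eigenvectorUnitary.2
  have h1 : star U * U = 1 := (Matrix.mem_unitaryGroup_iff').mp hUu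
  have h2 : U * star U = 1 := (Matrix.mem_unitaryGroup_iff).mp hUu
  have hspec : Mᴴ * M = U * diagonal ((↑) ∘ lam) * star U := hH.spectral_theorem
  set C : Matrix n n ℂ := M * U with hC
  have hCC : Cᴴ * C = diagonal ((↑) ∘ lam) := by
    calc Cᴴ * C = star U * (Mᴴ * M) * U := by
          simp [hC, Matrix.conjTranspose_mul, Matrix.mul_assoc, Matrix.star_eq_conjTranspose]
      _ = star U * (U * diagonal ((↑) ∘ lam) * star U) * U := by rw [hspec]
      _ = (star U * U) * (diagonal ((↑) ∘ lam) * (star U * U)) := by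
          simp only [Matrix.mul_assoc]
      _ = diagonal ((↑) ∘ lam) := by rw [h1]; simp
  set v : n → EuclideanSpace ℂ n := fun j => WithLp.toLp 2 (fun i => (Real.sqrt (lam j) : ℂ)⁻¹ * C i j) with hv
  have hsum : ∀ j k, ∑ i, (starRingEnd ℂ) (C i j) * C i k = diagonal ((↑) ∘ lam) j k := by
    intro j k
    rw [← hCC]
    simp [Matrix.mul_apply, Matrix.conjTranspose_apply]
  -- zero columns
  have hzero : ∀ j, lam j = 0 → ∀ i, C i j = 0 := by
    intro j hj i
    have h0 : ∑ i, Complex.normSq (C i j) = 0 := by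
      have := hsum j j
      rw [Matrix.diagonal_apply_eq] at this
      simp only [Function.comp_apply, hj, Complex.ofReal_zero] at this
      have : (∑ i, (starRingEnd ℂ) (C i j) * C i j).re = 0 := by rw [this]; simp
      simpa [Complex.normSq_apply, Complex.re_sum] using this
    have := (Finset.sum_eq_zero_iff_of_nonneg (fun i _ => Complex.normSq_nonneg (C i j))).mp h0
      i (Finset.mem_univ i)
    exact Complex.normSq_eq_zero.mp this
  have hortho : Orthonormal ℂ (Set.restrict {j | lam j ≠ 0} v) := by
    rw [orthonormal_iff_ite]
    rintro ⟨j, hj⟩ ⟨k, hk⟩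
    rw [PiLp.inner_apply]
    simp only [RCLike.inner_apply, Set.restrict_apply, hv, PiLp.toLp_apply]
    change ∑ x, ((Real.sqrt (lam k) : ℂ)⁻¹ * C x k) *
      (starRingEnd ℂ) ((Real.sqrt (lam j) : ℂ)⁻¹ * C x j) = _
    rw [Finset.sum_congr rfl (fun i _ => mul_comm ((Real.sqrt (lam k) : ℂ)⁻¹ * C i k) _)]
    have key : ∀ i, (starRingEnd ℂ) ((Real.sqrt (lam j) : ℂ)⁻¹ * C i j) *
        ((Real.sqrt (lam k) : ℂ)⁻¹ * C i k) =
        ((Real.sqrt (lam j) : ℂ)⁻¹ * (Real.sqrt (lam k) : ℂ)⁻¹) *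
          ((starRingEnd ℂ) (C i j) * C i k) := by
      intro i
      rw [RingHom.map_mul, map_inv₀, Complex.conj_ofReal]
      ring
    rw [Finset.sum_congr rfl (fun i _ => key i), ← Finset.mul_sum, hsum,
      Matrix.diagonal_apply]
    by_cases hjk : j = k
    · subst hjk
      simp only [if_pos rfl, Subtype.mk_eq_mk, if_pos rfl, Function.comp_apply, if_true]
      have hj' : lam j ≠ 0 := hj
      have hs : Real.sqrt (lam j) ≠ 0 :=
        Real.sqrt_ne_zero'.mpr (lt_of_le_of_ne (hlam0 j) (Ne.symm hj'))
      have hre : (Real.sqrt (lam j))⁻¹ * (Real.sqrt (lam j))⁻¹ * lam j = 1 := by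
        field_simp
        exact (Real.sq_sqrt (hlam0 j)).symm
      norm_cast
    · simp [hjk, Subtype.mk_eq_mk]
  -- extend to an orthonormal basis
  obtain ⟨b, hb⟩ := hortho.exists_orthonormalBasis_extension_of_card_eq
    (finrank_euclideanSpace (𝕜 := ℂ) (ι := n))
  set W' : Matrix n n ℂ := Matrix.of fun i j => b j i with hW'
  have hW'u : W' ∈ Matrix.unitaryGroup n ℂ := by
    rw [Matrix.mem_unitaryGroup_iff']
    ext j k
    have := orthonormal_iff_ite.mp b.orthonormal j k
    rw [PiLp.inner_apply] at this
    simp only [RCLike.inner_apply] at this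
    simp only [Matrix.mul_apply, Matrix.conjTranspose_apply, Matrix.star_eq_conjTranspose,
      hW', Matrix.of_apply, Matrix.one_apply, RCLike.star_def]
    rw [← this]
    exact Finset.sum_congr rfl (fun _ _ => mul_comm _ _)
  have hCW : C = W' * diagonal ((↑) ∘ Real.sqrt ∘ lam) := by
    ext i j
    rw [Matrix.mul_apply]
    simp only [Matrix.diagonal_apply, Function.comp_apply, hW', Matrix.of_apply]
    rw [Finset.sum_eq_single j (fun k _ hk => by simp [if_neg hk]) (by simp)]
    simp only [if_pos rfl]
    by_cases hj : lam j = 0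
    · simp [hzero j hj i, hj]
    · rw [hb j hj]
      simp only [hv, if_true, PiLp.toLp_apply]
      have hs : ((Real.sqrt (lam j) : ℝ) : ℂ) ≠ 0 := by
        norm_cast
        exact Real.sqrt_ne_zero'.mpr (lt_of_le_of_ne (hlam0 j) (Ne.symm hj))
      field_simp
  have hM : M = C * star U := by
    rw [hC, Matrix.mul_assoc, h2, Matrix.mul_one]
  refine ⟨W' * star U, mul_mem hW'u (Unitary.star_mem hUu), ?_⟩
  have hsqrt : h.sqrt = U * diagonal ((↑) ∘ Real.sqrt ∘ lam) * star U := rfl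
  calc W' * star U * h.sqrt
      = W' * ((star U * U) * (diagonal ((↑) ∘ Real.sqrt ∘ lam) * star U)) := by
        rw [hsqrt]; simp only [Matrix.mul_assoc]
    _ = W' * diagonal ((↑) ∘ Real.sqrt ∘ lam) * star U := by rw [h1]; simp [Matrix.mul_assoc]
    _ = C * star U := by rw [← hCW]
    _ = M := hM.symm


lemma sqrt_congr {A B : Matrix n n ℂ} (h : A = B) (hA : A.PosSemidef) (hB : B.PosSemidef) :
    hA.sqrt = hB.sqrt := by subst h; rfl

end TNaux

theorem Matrix.PosSemidef.sqrt_mul_self {n : Type*} [Fintype n] [DecidableEq n]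
    {A : Matrix n n ℂ} (hA : A.PosSemidef) : hA.sqrt * hA.sqrt = A := by
  have hspec : A = (hA.isHermitian.eigenvectorUnitary : Matrix n n ℂ) *
      diagonal ((↑) ∘ hA.isHermitian.eigenvalues) *
      (star hA.isHermitian.eigenvectorUnitary : Matrix n n ℂ) := hA.isHermitian.spectral_theorem
  have h1 : (star hA.isHermitian.eigenvectorUnitary : Matrix n n ℂ) *
      (hA.isHermitian.eigenvectorUnitary : Matrix n n ℂ) = 1 :=
    Unitary.coe_star_mul_self hA.isHermitian.eigenvectorUnitary
  unfold Matrix.PosSemidef.sqrt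
  conv_rhs => rw [hspec]
  simp only [Matrix.mul_assoc]
  rw [← Matrix.mul_assoc (star _ : Matrix n n ℂ) _ _, h1, Matrix.one_mul, ← Matrix.mul_assoc (diagonal _), diagonal_mul_diagonal]
  congr 3
  funext i
  simp [← Complex.ofReal_mul, Real.mul_self_sqrt (hA.eigenvalues_nonneg i)]

namespace TNaux

end TNaux

open Matrix in
/-- Upper bound on the trace distance in terms of the fidelity:
`‖ρ - σ‖ ≤ √((Tr ρ + Tr σ)² - 4 F(ρ,σ)²)`. -/
theorem traceNorm_le_of_fidelity {n : Type*} [Fintype n] [DecidableEq n]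
    {ρ σ : Matrix n n ℂ} (hρ : ρ.PosSemidef) (hσ : σ.PosSemidef) :
    traceNorm (ρ - σ) ≤
      Real.sqrt ((ρ.trace.re + σ.trace.re) ^ 2 - 4 * fid hρ hσ ^ 2) := by
  classical
  set A := hρ.sqrt with hA
  have hAH : Aᴴ = A := hρ.posSemidef_sqrt.isHermitian.eq
  have hAA : A * A = ρ := hρ.sqrt_mul_self
  set A' := hσ.sqrt with hA'
  have hA'H : A'ᴴ = A' := hσ.posSemidef_sqrt.isHermitian.eq
  have hA'A' : A' * A' = σ := hσ.sqrt_mul_self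
  set M := A' * A with hM
  obtain ⟨W, hWu, hWS⟩ := TNaux.exists_polar M
  set S := (Matrix.posSemidef_conjTranspose_mul_self M).sqrt with hS
  have hW1 : star W * W = 1 := (Matrix.mem_unitaryGroup_iff').mp hWu
  have hW2 : W * star W = 1 := (Matrix.mem_unitaryGroup_iff).mp hWu
  set B := A' * W with hB
  set f := fid hρ hσ with hf
  -- identify the fidelity with the trace of S
  have hMM : Mᴴ * M = hρ.sqrt * σ * hρ.sqrt := by
    rw [hM, Matrix.conjTranspose_mul, hAH, hA'H, Matrix.mul_assoc, ← Matrix.mul_assoc A' A' A,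
      hA'A', ← hA, ← Matrix.mul_assoc]
  have hfid : f = S.trace.re := by
    have hX : (hρ.sqrt * σ * hρ.sqrt).PosSemidef :=
      by rw [← hMM]; exact Matrix.posSemidef_conjTranspose_mul_self M
    have h1 : f = hX.sqrt.trace.re := rfl
    rw [h1, TNaux.sqrt_congr hMM.symm hX (Matrix.posSemidef_conjTranspose_mul_self M), hS]
  -- trace identities
  have hBhA : Bᴴ * A = star W * M := by
    rw [hB, Matrix.conjTranspose_mul, hA'H, ← Matrix.star_eq_conjTranspose W, hM,
      Matrix.mul_assoc]
  have hWM : star W * M = S := by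
    rw [← hWS, ← Matrix.mul_assoc, hW1, Matrix.one_mul]
  have hBA_tr : (Bᴴ * A).trace.re = f := by rw [hBhA, hWM, hfid]
  have hAB_tr : (Aᴴ * B).trace.re = f := by
    have h1 : Aᴴ * B = (Bᴴ * A)ᴴ := by
      rw [Matrix.conjTranspose_mul, Matrix.conjTranspose_conjTranspose]
    rw [h1, Matrix.trace_conjTranspose, ← hBA_tr]
    exact Complex.conj_re _
  have hAA_tr : (Aᴴ * A).trace.re = ρ.trace.re := by rw [hAH, hAA]
  have hBB_tr : (Bᴴ * B).trace.re = σ.trace.re := by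
    have h1 : Bᴴ * B = (star W * A') * (A' * W) := by
      rw [hB, Matrix.conjTranspose_mul, hA'H, ← Matrix.star_eq_conjTranspose W]
    rw [h1, Matrix.trace_mul_comm, Matrix.mul_assoc, ← Matrix.mul_assoc W (star W) A', hW2,
      Matrix.one_mul, hA'A']
  have hBBH : B * Bᴴ = σ := by
    rw [hB, Matrix.conjTranspose_mul, hA'H, ← Matrix.star_eq_conjTranspose W,
      Matrix.mul_assoc A' W _, ← Matrix.mul_assoc W (star W) A', hW2, Matrix.one_mul, hA'A']
  have hAAH : A * Aᴴ = ρ := by rw [hAH, hAA]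
  set t : ℝ := ρ.trace.re + σ.trace.re with ht
  set P := A - B with hP
  set Q := A + B with hQ
  have hPexp : Pᴴ * P = Aᴴ * A - Aᴴ * B - Bᴴ * A + Bᴴ * B := by
    rw [hP, Matrix.conjTranspose_sub]; noncomm_ring
  have hQexp : Qᴴ * Q = Aᴴ * A + Aᴴ * B + Bᴴ * A + Bᴴ * B := by
    rw [hQ, Matrix.conjTranspose_add]; noncomm_ring
  have hPP : (Pᴴ * P).trace.re = t - 2 * f := by
    rw [hPexp, Matrix.trace_add, Matrix.trace_sub, Matrix.trace_sub, Complex.add_re,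
      Complex.sub_re, Complex.sub_re, hAA_tr, hAB_tr, hBA_tr, hBB_tr, ht]; ring
  have hQQ : (Qᴴ * Q).trace.re = t + 2 * f := by
    rw [hQexp, Matrix.trace_add, Matrix.trace_add, Matrix.trace_add, Complex.add_re,
      Complex.add_re, Complex.add_re, hAA_tr, hAB_tr, hBA_tr, hBB_tr, ht]; ring
  have hPnn : 0 ≤ t - 2 * f := hPP ▸ TNaux.trace_self_nonneg P
  have hQnn : 0 ≤ t + 2 * f := hQQ ▸ TNaux.trace_self_nonneg Q
  -- polar decomposition of the difference
  set D := ρ - σ with hD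
  obtain ⟨V, hVu, hVS⟩ := TNaux.exists_polar D
  set SD := (Matrix.posSemidef_conjTranspose_mul_self D).sqrt with hSD
  have hV1 : star V * V = 1 := (Matrix.mem_unitaryGroup_iff').mp hVu
  have hV2 : V * star V = 1 := (Matrix.mem_unitaryGroup_iff).mp hVu
  have htn : traceNorm (ρ - σ) = SD.trace.re := rfl
  have hVD : star V * D = SD := by rw [← hVS, ← Matrix.mul_assoc, hV1, Matrix.one_mul]
  have hD2 : P * Qᴴ + Q * Pᴴ = D + D := by
    have expand : P * Qᴴ + Q * Pᴴ = (A * Aᴴ - B * Bᴴ) + (A * Aᴴ - B * Bᴴ) := by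
      rw [hP, hQ, Matrix.conjTranspose_add, Matrix.conjTranspose_sub]; noncomm_ring
    rw [expand, hAAH, hBBH, hD]
  have hsplit : (Vᴴ * (P * Qᴴ)).trace.re + (Vᴴ * (Q * Pᴴ)).trace.re = 2 * SD.trace.re := by
    have h1 : Vᴴ * (P * Qᴴ) + Vᴴ * (Q * Pᴴ) = star V * D + star V * D := by
      rw [← Matrix.mul_add, hD2, Matrix.mul_add, Matrix.star_eq_conjTranspose]
    have h2 := congrArg (fun X => X.trace.re) h1
    simp only [Matrix.trace_add, Complex.add_re, hVD] at h2
    linarith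
  -- Cauchy-Schwarz bounds
  have hb1 : (Vᴴ * (P * Qᴴ)).trace.re ≤
      Real.sqrt ((Qᴴ * Q).trace.re) * Real.sqrt ((Pᴴ * P).trace.re) := by
    have h1 : Vᴴ * (P * Qᴴ) = (Vᴴ * P) * Qᴴ := by rw [Matrix.mul_assoc]
    have h2 : ((Vᴴ * P)ᴴ * (Vᴴ * P)) = Pᴴ * P := by
      rw [Matrix.conjTranspose_mul, Matrix.conjTranspose_conjTranspose, Matrix.mul_assoc,
        ← Matrix.mul_assoc V Vᴴ P, ← Matrix.star_eq_conjTranspose V, hV2, Matrix.one_mul]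
    have h3 := TNaux.cs Q (Vᴴ * P)
    rw [h2] at h3
    rw [h1, Matrix.trace_mul_comm]
    exact h3
  have hb2 : (Vᴴ * (Q * Pᴴ)).trace.re ≤
      Real.sqrt ((Pᴴ * P).trace.re) * Real.sqrt ((Qᴴ * Q).trace.re) := by
    have h1 : Vᴴ * (Q * Pᴴ) = (Vᴴ * Q) * Pᴴ := by rw [Matrix.mul_assoc]
    have h2 : ((Vᴴ * Q)ᴴ * (Vᴴ * Q)) = Qᴴ * Q := by
      rw [Matrix.conjTranspose_mul, Matrix.conjTranspose_conjTranspose, Matrix.mul_assoc,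
        ← Matrix.mul_assoc V Vᴴ Q, ← Matrix.star_eq_conjTranspose V, hV2, Matrix.one_mul]
    have h3 := TNaux.cs P (Vᴴ * Q)
    rw [h2] at h3
    rw [h1, Matrix.trace_mul_comm]
    exact h3
  rw [htn]
  have hfinal : SD.trace.re ≤ Real.sqrt (t - 2 * f) * Real.sqrt (t + 2 * f) := by
    rw [hPP, hQQ] at hb1 hb2
    nlinarith [hsplit, hb1, hb2]
  calc SD.trace.re ≤ Real.sqrt (t - 2 * f) * Real.sqrt (t + 2 * f) := hfinal
    _ = Real.sqrt ((t - 2 * f) * (t + 2 * f)) := (Real.sqrt_mul hPnn _).symm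
    _ = Real.sqrt ((ρ.trace.re + σ.trace.re) ^ 2 - 4 * fid hρ hσ ^ 2) := by
      rw [ht, hf]; ring_nf
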